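/- Let G be a group acting by homeomorphisms on an R-tree T with non-nesting action, and let g, h ∈ G be elliptic elements with Fix(g) ∩ Fix(h) = ∅. Then the commutator g⁻¹h⁻¹gh is hyperbolic. -/

import Mathlib

open Set

section TreeDefs

/-- `A` is an arc from `a` to `b`: a homeomorphic image of `[0,1]` with endpoints `a,b`. -/
def ArcFrom {T : Type*} [TopologicalSpace T] (a b : T) (A : Set T) : Prop :=
  ∃ f : ℝ → T, ContinuousOn f (Set.Icc 0 1) ∧ Set.InjOn f (Set.Icc 0 1) ∧
    f 0 = a ∧ f 1 = b ∧ f '' Set.Icc 0 1 = A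

/-- `T` is uniquely arcwise connected: any two distinct points are joined by a
unique arc. Together with metrizability this is the definition of an `ℝ`-tree. -/
def IsRTree (T : Type*) [TopologicalSpace T] : Prop :=
  ∀ a b : T, a ≠ b →
    (∃ A : Set T, ArcFrom a b A) ∧
    ∀ A A' : Set T, ArcFrom a b A → ArcFrom a b A' → A = A'

/-- The action is non-nesting: no group element maps a closed arc properly into itself. -/
def NonNesting (G T : Type*) [TopologicalSpace T] [Group G] [MulAction G T] : Prop :=
  ∀ (g : G) (a b : T) (A : Set T), ArcFrom a b A → ¬((fun x => g • x) '' A ⊂ A)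

/-- A ray: a subspace homeomorphic to `[0,∞)`. -/
def IsRay {T : Type*} [TopologicalSpace T] (R : Set T) : Prop :=
  Nonempty (↥R ≃ₜ ↥(Set.Ici (0 : ℝ)))

end TreeDefs

namespace Stmt19

variable {T : Type*} [MetricSpace T] {G : Type*} [Group G] [MulAction G T]

theorem zero_mem_unit : (0:ℝ) ∈ Icc (0:ℝ) 1 := by norm_num
theorem one_mem_unit : (1:ℝ) ∈ Icc (0:ℝ) 1 := by norm_num

theorem arcFrom_ne {a b : T} {A : Set T} (h : ArcFrom a b A) : a ≠ b := by
  obtain ⟨f, -, hinj, h0, h1, -⟩ := h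
  intro hab
  have : (0:ℝ) = 1 := hinj zero_mem_unit one_mem_unit (by rw [h0, h1, hab])
  norm_num at this

theorem arcFrom_mem_left {a b : T} {A : Set T} (h : ArcFrom a b A) : a ∈ A := by
  obtain ⟨f, -, -, h0, -, himg⟩ := h
  exact himg ▸ ⟨0, zero_mem_unit, h0⟩

theorem arcFrom_mem_right {a b : T} {A : Set T} (h : ArcFrom a b A) : b ∈ A := by
  obtain ⟨f, -, -, -, h1, himg⟩ := h
  exact himg ▸ ⟨1, one_mem_unit, h1⟩

theorem arcFrom_symm {a b : T} {A : Set T} (h : ArcFrom a b A) : ArcFrom b a A := by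
  obtain ⟨f, hc, hinj, h0, h1, himg⟩ := h
  have hmaps : MapsTo (fun t : ℝ => 1 - t) (Icc 0 1) (Icc (0:ℝ) 1) := by
    intro t ht; simp only [mem_Icc] at *; constructor <;> linarith [ht.1, ht.2]
  refine ⟨fun t => f (1 - t), hc.comp (by fun_prop) hmaps, ?_, by simpa using h1,
    by simpa using h0, ?_⟩
  · intro s hs t ht hst
    have h2 := hinj (hmaps hs) (hmaps ht) hst
    simp only at h2
    linarith
  · rw [← himg, show (fun t : ℝ => f (1 - t)) = f ∘ (fun t : ℝ => 1 - t) from rfl, image_comp,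
      Set.image_const_sub_Icc]
    norm_num

theorem arcFrom_image {a b : T} {A : Set T} {φ : T → T} (hφc : Continuous φ)
    (hφi : Function.Injective φ) (h : ArcFrom a b A) : ArcFrom (φ a) (φ b) (φ '' A) := by
  obtain ⟨f, hc, hinj, h0, h1, himg⟩ := h
  exact ⟨φ ∘ f, hφc.comp_continuousOn hc, fun s hs t ht hst => hinj hs ht (hφi hst),
    by simp [h0], by simp [h1], by rw [image_comp, himg]⟩

theorem image_affine {c d : ℝ} (hcd : c ≤ d) :
    (fun x : ℝ => c + x * (d - c)) '' Icc 0 1 = Icc c d := by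
  ext y; constructor
  · rintro ⟨x, hx, rfl⟩
    simp only [mem_Icc] at *
    constructor <;> nlinarith [hx.1, hx.2]
  · intro hy
    simp only [mem_Icc] at hy
    rcases eq_or_lt_of_le hcd with rfl | hlt
    · exact ⟨0, by norm_num, by simp; linarith⟩
    · refine ⟨(y - c) / (d - c), ?_, ?_⟩
      · simp only [mem_Icc]
        constructor
        · apply div_nonneg (by linarith) (by linarith)
        · rw [div_le_one (by linarith)]; linarith
      · show c + (y - c) / (d - c) * (d - c) = y
        have hne : d - c ≠ 0 := by linarith
        field_simp
        ring

theorem subarc {f : ℝ → T} (hc : ContinuousOn f (Icc 0 1)) (hinj : InjOn f (Icc 0 1))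
    {s t : ℝ} (hs : s ∈ Icc (0:ℝ) 1) (ht : t ∈ Icc (0:ℝ) 1) (hlt : s < t) :
    ArcFrom (f s) (f t) (f '' Icc s t) := by
  simp only [mem_Icc] at hs ht
  have hsub : Icc s t ⊆ Icc (0:ℝ) 1 := Icc_subset_Icc hs.1 ht.2
  have hmaps : MapsTo (fun x : ℝ => s + x * (t - s)) (Icc 0 1) (Icc s t) := by
    intro x hx
    rw [← image_affine hlt.le]
    exact mem_image_of_mem _ hx
  refine ⟨fun x => f (s + x * (t - s)), hc.comp (by fun_prop) (hmaps.mono_right hsub),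
    ?_, by simp, by simpa using congrArg f (by ring : s + 1 * (t - s) = t), ?_⟩
  · intro x hx y hy hxy
    have h3 := hinj (hsub (hmaps hx)) (hsub (hmaps hy)) hxy
    simp only at h3
    have h2 : x * (t - s) = y * (t - s) := by linarith
    exact mul_right_cancel₀ (by linarith) h2
  · rw [show (fun x => f (s + x * (t - s))) = f ∘ (fun x : ℝ => s + x * (t - s)) from rfl,
      image_comp, image_affine hlt.le]

section Seg

open Classical in
noncomputable def seg (hRT : IsRTree T) (a b : T) : Set T :=
  if h : a = b then {a} else (hRT a b h).1.choose

variable (hRT : IsRTree T)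

theorem seg_self (a : T) : seg hRT a a = {a} := by
  unfold seg
  exact dif_pos rfl

theorem arcFrom_seg {a b : T} (h : a ≠ b) : ArcFrom a b (seg hRT a b) := by
  unfold seg
  rw [dif_neg h]
  exact (hRT a b h).1.choose_spec

theorem seg_eq {a b : T} {A : Set T} (h : ArcFrom a b A) : seg hRT a b = A :=
  (hRT a b (arcFrom_ne h)).2 _ _ (arcFrom_seg hRT (arcFrom_ne h)) h

theorem mem_seg_left (a b : T) : a ∈ seg hRT a b := by
  by_cases h : a = b
  · subst h; rw [seg_self]; exact rfl
  · exact arcFrom_mem_left (arcFrom_seg hRT h)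

theorem mem_seg_right (a b : T) : b ∈ seg hRT a b := by
  by_cases h : a = b
  · subst h; rw [seg_self]; exact rfl
  · exact arcFrom_mem_right (arcFrom_seg hRT h)

theorem seg_comm (a b : T) : seg hRT a b = seg hRT b a := by
  by_cases h : a = b
  · subst h; rfl
  · exact seg_eq hRT (arcFrom_symm (arcFrom_seg hRT (Ne.symm h)))

theorem seg_image (hcont : ∀ g : G, Continuous fun x : T => g • x) (e : G) (a b : T) :
    (fun x => e • x) '' seg hRT a b = seg hRT (e • a) (e • b) := by
  by_cases h : a = b
  · subst h; rw [seg_self, seg_self, image_singleton]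
  · exact (seg_eq hRT (arcFrom_image (hcont e) (MulAction.injective e)
      (arcFrom_seg hRT h))).symm

theorem isClosed_seg (a b : T) : IsClosed (seg hRT a b) := by
  by_cases h : a = b
  · subst h; rw [seg_self]; exact isClosed_singleton
  · obtain ⟨f, hc, -, -, -, himg⟩ := arcFrom_seg hRT h
    rw [← himg]
    exact (isCompact_Icc.image_of_continuousOn hc).isClosed

/-- Master parametrization lemma for a segment. -/
theorem seg_param {a b : T} (h : a ≠ b) :
    ∃ f : ℝ → T, ContinuousOn f (Icc 0 1) ∧ InjOn f (Icc 0 1) ∧ f 0 = a ∧ f 1 = b ∧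
      f '' Icc 0 1 = seg hRT a b ∧
      ∀ s t : ℝ, s ∈ Icc (0:ℝ) 1 → t ∈ Icc (0:ℝ) 1 → s ≤ t →
        f '' Icc s t = seg hRT (f s) (f t) := by
  obtain ⟨f, hc, hinj, h0, h1, himg⟩ := arcFrom_seg hRT h
  refine ⟨f, hc, hinj, h0, h1, himg, ?_⟩
  intro s t hs ht hst
  rcases eq_or_lt_of_le hst with rfl | hlt
  · rw [Icc_self, image_singleton, seg_self]
  · exact (seg_eq hRT (subarc hc hinj hs ht hlt)).symm

theorem seg_subset_left {a b c : T} (hc : c ∈ seg hRT a b) : seg hRT a c ⊆ seg hRT a b := by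
  by_cases h : a = b
  · subst h
    rw [seg_self, mem_singleton_iff] at hc
    subst hc
    exact Subset.rfl
  · obtain ⟨f, -, -, h0, -, himg, hpar⟩ := seg_param hRT h
    rw [← himg] at hc
    obtain ⟨r, hr, rfl⟩ := hc
    have e1 : seg hRT a (f r) = f '' Icc 0 r := by
      rw [← h0]
      exact (hpar 0 r zero_mem_unit hr (mem_Icc.1 hr).1).symm
    rw [e1, ← himg]
    exact image_mono (f := _) (Icc_subset_Icc le_rfl (mem_Icc.1 hr).2)

theorem seg_subset_right {a b c : T} (hc : c ∈ seg hRT a b) : seg hRT c b ⊆ seg hRT a b := by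
  rw [seg_comm hRT c b, seg_comm hRT a b]
  exact seg_subset_left hRT (by rwa [seg_comm hRT b a])

theorem seg_split {a b c : T} (hc : c ∈ seg hRT a b) :
    seg hRT a b = seg hRT a c ∪ seg hRT c b := by
  by_cases h : a = b
  · subst h
    rw [seg_self, mem_singleton_iff] at hc
    subst hc
    simp [seg_self]
  · obtain ⟨f, -, -, h0, h1, himg, hpar⟩ := seg_param hRT h
    rw [← himg] at hc
    obtain ⟨r, hr, rfl⟩ := hc
    have e1 : seg hRT a (f r) = f '' Icc 0 r := by
      rw [← h0]
      exact (hpar 0 r zero_mem_unit hr (mem_Icc.1 hr).1).symm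
    have e2 : seg hRT (f r) b = f '' Icc r 1 := by
      rw [← h1]
      exact (hpar r 1 hr one_mem_unit (mem_Icc.1 hr).2).symm
    rw [e1, e2, ← image_union, Icc_union_Icc_eq_Icc (mem_Icc.1 hr).1 (mem_Icc.1 hr).2, himg]

theorem seg_inter {a b c : T} (hc : c ∈ seg hRT a b) :
    seg hRT a c ∩ seg hRT c b = {c} := by
  by_cases h : a = b
  · subst h
    rw [seg_self, mem_singleton_iff] at hc
    subst hc
    rw [seg_self, inter_self]
  · obtain ⟨f, -, hinj, h0, h1, himg, hpar⟩ := seg_param hRT h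
    rw [← himg] at hc
    obtain ⟨r, hr, rfl⟩ := hc
    have e1 : seg hRT a (f r) = f '' Icc 0 r := by
      rw [← h0]
      exact (hpar 0 r zero_mem_unit hr (mem_Icc.1 hr).1).symm
    have e2 : seg hRT (f r) b = f '' Icc r 1 := by
      rw [← h1]
      exact (hpar r 1 hr one_mem_unit (mem_Icc.1 hr).2).symm
    rw [e1, e2]
    apply Subset.antisymm
    · rintro z ⟨hz1, hz2⟩
      obtain ⟨t1, ht1, rfl⟩ := hz1
      obtain ⟨t2, ht2, he⟩ := hz2
      have hsub1 : Icc (0:ℝ) r ⊆ Icc 0 1 := Icc_subset_Icc le_rfl (mem_Icc.1 hr).2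
      have hsub2 : Icc r 1 ⊆ Icc (0:ℝ) 1 := Icc_subset_Icc (mem_Icc.1 hr).1 le_rfl
      have heq := hinj (hsub2 ht2) (hsub1 ht1) he
      subst heq
      have : t2 = r := le_antisymm (mem_Icc.1 ht1).2 (mem_Icc.1 ht2).1
      rw [mem_singleton_iff, this]
    · rintro z rfl
      exact ⟨⟨r, ⟨(mem_Icc.1 hr).1, le_rfl⟩, rfl⟩, ⟨r, ⟨le_rfl, (mem_Icc.1 hr).2⟩, rfl⟩⟩

theorem seg_sub_two {a b c d : T} (hc : c ∈ seg hRT a b) (hd : d ∈ seg hRT a b) :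
    seg hRT c d ⊆ seg hRT a b := by
  by_cases h : a = b
  · subst h
    rw [seg_self, mem_singleton_iff] at hc hd
    subst hc; subst hd
    exact Subset.rfl
  · obtain ⟨f, -, -, -, -, himg, hpar⟩ := seg_param hRT h
    rw [← himg] at hc hd
    obtain ⟨r1, hr1, rfl⟩ := hc
    obtain ⟨r2, hr2, rfl⟩ := hd
    rcases le_total r1 r2 with hle | hle
    · rw [← hpar r1 r2 hr1 hr2 hle, ← himg]
      exact image_mono (f := _) (Icc_subset_Icc (mem_Icc.1 hr1).1 (mem_Icc.1 hr2).2)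
    · rw [seg_comm, ← hpar r2 r1 hr2 hr1 hle, ← himg]
      exact image_mono (f := _) (Icc_subset_Icc (mem_Icc.1 hr2).1 (mem_Icc.1 hr1).2)

end Seg

section Fix

variable (hRT : IsRTree T)

theorem image_inv_image (e : G) (A : Set T) :
    (fun x : T => e⁻¹ • x) '' ((fun x : T => e • x) '' A) = A := by
  rw [← image_comp]
  simp [Function.comp]

theorem ssub_left {f : ℝ → T} (hinj : InjOn f (Icc 0 1)) {r' r : ℝ}
    (h0 : 0 ≤ r') (hlt : r' < r) (h1 : r ≤ 1) :
    f '' Icc 0 r' ⊂ f '' Icc 0 r := by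
  rw [ssubset_iff_of_subset (image_mono (f := _) (Icc_subset_Icc le_rfl hlt.le))]
  refine ⟨f r, ⟨r, ⟨by linarith, le_rfl⟩, rfl⟩, ?_⟩
  rintro ⟨t, ht, he⟩
  have := hinj (Icc_subset_Icc le_rfl (by linarith) ht) ⟨by linarith, h1⟩ he
  rw [mem_Icc] at ht
  linarith [this, ht.2]

theorem ssub_right {f : ℝ → T} (hinj : InjOn f (Icc 0 1)) {r r' : ℝ}
    (h0 : 0 ≤ r) (hlt : r < r') (h1 : r' ≤ 1) :
    f '' Icc r' 1 ⊂ f '' Icc r 1 := by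
  rw [ssubset_iff_of_subset (image_mono (f := _) (Icc_subset_Icc hlt.le le_rfl))]
  refine ⟨f r, ⟨r, ⟨le_rfl, by linarith⟩, rfl⟩, ?_⟩
  rintro ⟨t, ht, he⟩
  have := hinj (Icc_subset_Icc (by linarith) le_rfl ht) ⟨h0, by linarith⟩ he
  rw [mem_Icc] at ht
  linarith [this, ht.1]

/-- If `e` fixes both endpoints of a segment, it fixes the segment pointwise. -/
theorem fix_seg (hcont : ∀ g : G, Continuous fun x : T => g • x) (hnn : NonNesting G T)
    {e : G} {a b c : T}
    (ha : e • a = a) (hb : e • b = b) (hc : c ∈ seg hRT a b) : e • c = c := by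
  by_cases hab : a = b
  · subst hab
    rw [seg_self, mem_singleton_iff] at hc
    subst hc
    exact ha
  obtain ⟨f, hcf, hinj, h0, h1, himg, hpar⟩ := seg_param hRT hab
  rw [← himg] at hc
  obtain ⟨r, hr, rfl⟩ := hc
  by_contra hne
  have hmem : e • f r ∈ f '' Icc 0 1 := by
    have : e • f r ∈ (fun x => e • x) '' seg hRT a b := mem_image_of_mem _ (by
      rw [← himg]; exact ⟨r, hr, rfl⟩)
    rwa [seg_image hRT hcont, ha, hb, ← himg] at this
  obtain ⟨r', hr', he'⟩ := hmem
  have hrr : r ≠ r' := by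
    rintro rfl
    exact hne he'.symm
  rw [mem_Icc] at hr hr'
  rcases lt_or_gt_of_ne hrr with hlt | hlt
  · -- r < r' : look at the arc from f r to b
    have hfrb : f r ≠ b := by
      rw [← h1]
      intro hcon
      have := hinj ⟨hr.1, hr.2⟩ one_mem_unit hcon
      linarith [hr'.2]
    have hC : f '' Icc r 1 = seg hRT (f r) b := by
      rw [← h1]
      exact hpar r 1 ⟨hr.1, hr.2⟩ one_mem_unit hr.2
    have harc : ArcFrom (f r) b (f '' Icc r 1) := hC ▸ arcFrom_seg hRT hfrb
    have himgC : (fun x => e • x) '' (f '' Icc r 1) = f '' Icc r' 1 := by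
      rw [hC, seg_image hRT hcont, hb, ← he', ← h1]
      exact (hpar r' 1 ⟨hr'.1, hr'.2⟩ one_mem_unit hr'.2).symm
    exact hnn e (f r) b _ harc (himgC ▸ ssub_right hinj hr.1 hlt hr'.2)
  · -- r' < r : look at the arc from a to f r
    have hafr : a ≠ f r := by
      rw [← h0]
      intro hcon
      have := hinj zero_mem_unit ⟨hr.1, hr.2⟩ hcon
      linarith [hr'.1]
    have hC : f '' Icc 0 r = seg hRT a (f r) := by
      rw [← h0]
      exact hpar 0 r zero_mem_unit ⟨hr.1, hr.2⟩ hr.1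
    have harc : ArcFrom a (f r) (f '' Icc 0 r) := hC ▸ arcFrom_seg hRT hafr
    have himgC : (fun x => e • x) '' (f '' Icc 0 r) = f '' Icc 0 r' := by
      rw [hC, seg_image hRT hcont, ha, ← he', ← h0]
      exact (hpar 0 r' zero_mem_unit ⟨hr'.1, hr'.2⟩ hr'.1).symm
    exact hnn e a (f r) _ harc (himgC ▸ ssub_left hinj hr'.1 hlt hr.2)

/-- If `e` maps a segment onto itself and fixes one endpoint, it fixes the other. -/
theorem fix_endpoint (hcont : ∀ g : G, Continuous fun x : T => g • x)
    (hnn : NonNesting G T) {e : G} {a b : T} (hab : a ≠ b)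
    (himgA : (fun x => e • x) '' seg hRT a b = seg hRT a b) (ha : e • a = a) :
    e • b = b := by
  obtain ⟨f, hcf, hinj, h0, h1, himg, hpar⟩ := seg_param hRT hab
  by_contra hbne
  -- b has a preimage d in the segment
  have hbmem : b ∈ (fun x => e • x) '' seg hRT a b := by
    rw [himgA]
    exact mem_seg_right hRT a b
  obtain ⟨d, hd, hde0⟩ := hbmem
  rw [← himg] at hd
  obtain ⟨r1, hr1, rfl⟩ := hd
  have hde : e • f r1 = b := hde0
  -- e • b is in the segment
  have hebmem : e • b ∈ f '' Icc 0 1 := by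
    have : e • b ∈ (fun x => e • x) '' seg hRT a b := mem_image_of_mem _ (mem_seg_right hRT a b)
    rwa [himgA, ← himg] at this
  obtain ⟨r0, hr0, he0⟩ := hebmem
  rw [mem_Icc] at hr0 hr1
  have hr1lt : r1 < 1 := by
    rcases lt_or_eq_of_le hr1.2 with h | h
    · exact h
    · exfalso
      have : f r1 = b := by rw [h, h1]
      rw [this] at hde
      exact hbne hde
  have hr0lt : r0 < 1 := by
    rcases lt_or_eq_of_le hr0.2 with h | h
    · exact h
    · exfalso
      have : f r0 = b := by rw [h, h1]
      rw [this] at he0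
      exact hbne he0.symm
  have hfr1b : f r1 ≠ b := by
    rw [← h1]
    intro hcon
    have := hinj ⟨hr1.1, hr1.2⟩ one_mem_unit hcon
    linarith
  have hebb : e • b ≠ b := hbne
  have hC1 : f '' Icc r1 1 = seg hRT (f r1) b := by
    rw [← h1]
    exact hpar r1 1 ⟨hr1.1, hr1.2⟩ one_mem_unit hr1.2
  have himgC1 : (fun x => e • x) '' (f '' Icc r1 1) = f '' Icc r0 1 := by
    rw [hC1, seg_image hRT hcont, hde, seg_comm, ← he0, ← h1]
    exact (hpar r0 1 ⟨hr0.1, hr0.2⟩ one_mem_unit hr0.2).symm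
  rcases lt_trichotomy r0 r1 with hlt | heq | hlt
  · -- r0 < r1 : e⁻¹ maps f''Icc r0 1 properly into itself
    have hC0 : f '' Icc r0 1 = seg hRT (f r0) b := by
      rw [← h1]
      exact hpar r0 1 ⟨hr0.1, hr0.2⟩ one_mem_unit hr0.2
    have hfr0b : f r0 ≠ b := by
      rw [← h1]
      intro hcon
      have := hinj ⟨hr0.1, hr0.2⟩ one_mem_unit hcon
      linarith
    have harc0 : ArcFrom (f r0) b (f '' Icc r0 1) := hC0 ▸ arcFrom_seg hRT hfr0b
    have hinv : (fun x => e⁻¹ • x) '' (f '' Icc r0 1) = f '' Icc r1 1 := by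
      rw [← himgC1, image_inv_image]
    exact hnn e⁻¹ (f r0) b _ harc0 (hinv ▸ ssub_right hinj hr0.1 hlt hr1.2)
  · -- r0 = r1 : e swaps b and f r0 = e • b ; then e maps seg a (e•b) onto seg a b properly
    subst heq
    rw [he0] at hde
    -- hde : e • (e • b) = b
    have hr0pos : 0 < r0 := by
      rcases lt_or_eq_of_le hr0.1 with h | h
      · exact h
      · exfalso
        have heba : e • b = a := by rw [← he0, ← h, h0]
        exact hab (MulAction.injective e (show e • b = e • a by rw [heba, ha])).symm
    have haeb : a ≠ e • b := by
      rw [← h0, ← he0]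
      intro hcon
      have := hinj zero_mem_unit ⟨hr0.1, hr0.2⟩ hcon
      linarith
    have hC : f '' Icc 0 r0 = seg hRT a (e • b) := by
      rw [← h0, ← he0]
      exact hpar 0 r0 zero_mem_unit ⟨hr0.1, hr0.2⟩ hr0.1
    have himgC : (fun x => e • x) '' (f '' Icc 0 r0) = seg hRT a b := by
      rw [hC, seg_image hRT hcont, ha, hde]
    have hinv : (fun x => e⁻¹ • x) '' seg hRT a b = f '' Icc 0 r0 := by
      rw [← himgC, image_inv_image]
    have hproper : f '' Icc 0 r0 ⊂ seg hRT a b := by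
      rw [← himg]
      exact ssub_left hinj hr0.1 hr0lt le_rfl
    exact hnn e⁻¹ a b _ (arcFrom_seg hRT hab) (hinv ▸ hproper)
  · -- r1 < r0 : e maps f''Icc r1 1 properly into itself
    have harc1 : ArcFrom (f r1) b (f '' Icc r1 1) := hC1 ▸ arcFrom_seg hRT hfr1b
    exact hnn e (f r1) b _ harc1 (himgC1 ▸ ssub_right hinj hr1.1 hlt hr0.2)

end Fix

section Key

variable (hRT : IsRTree T)

/-- Key lemma: if `e` fixes `x`, the "last common point" `m` of `[x,u]` and `[x,eu]`
is fixed by `e`. -/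
theorem key (hcont : ∀ g : G, Continuous fun x : T => g • x) (hnn : NonNesting G T)
    {e : G} {x u : T} (hx : e • x = x) (hu : u ≠ x) :
    ∃ m, m ∈ seg hRT x u ∧ m ∈ seg hRT x (e • u) ∧ e • m = m ∧
      ∀ w, w ∈ seg hRT m u → w ∈ seg hRT x (e • u) → w = m := by
  obtain ⟨f, hcf, hinj, h0, h1, himg, hpar⟩ := seg_param hRT (Ne.symm hu)
  set W : Set ℝ := Icc 0 1 ∩ f ⁻¹' (seg hRT x (e • u)) with hWdef
  have hWclosed : IsClosed W :=
    hcf.preimage_isClosed_of_isClosed isClosed_Icc (isClosed_seg hRT _ _)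
  have h0W : (0:ℝ) ∈ W := ⟨zero_mem_unit, by
    simp only [mem_preimage, h0]
    exact mem_seg_left hRT _ _⟩
  have hWcomp : IsCompact W := isCompact_Icc.of_isClosed_subset hWclosed inter_subset_left
  have hWbdd : BddAbove W := bddAbove_Icc.mono inter_subset_left
  set r : ℝ := sSup W with hrdef
  have hrW : r ∈ W := hWcomp.sSup_mem ⟨0, h0W⟩
  have hrI : r ∈ Icc (0:ℝ) 1 := hrW.1
  refine ⟨f r, ?_, hrW.2, ?_, ?_⟩
  · rw [← himg]
    exact ⟨r, hrI, rfl⟩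
  · -- e fixes f r
    by_cases hmx : f r = x
    · rw [hmx]
      exact hx
    have hm1 : f r ∈ seg hRT x u := by
      rw [← himg]
      exact ⟨r, hrI, rfl⟩
    have hxeu : x ≠ e • u := by
      intro hcon
      apply hmx
      have := hrW.2
      rw [← hcon, seg_self] at this
      simpa using this
    obtain ⟨f₂, hcf₂, hinj₂, h₂0, h₂1, himg₂, hpar₂⟩ := seg_param hRT hxeu
    have hm2 : f r ∈ f₂ '' Icc 0 1 := by rw [himg₂]; exact hrW.2
    obtain ⟨p1, hp1, hp1e⟩ := hm2
    have hem : e • f r ∈ f₂ '' Icc 0 1 := by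
      rw [himg₂]
      have : e • f r ∈ (fun y => e • y) '' seg hRT x u := mem_image_of_mem _ hm1
      rwa [seg_image hRT hcont, hx] at this
    obtain ⟨p2, hp2, hp2e⟩ := hem
    rw [mem_Icc] at hp1 hp2
    have hsegm : seg hRT x (f r) = f₂ '' Icc 0 p1 := by
      rw [← hp1e, ← h₂0]
      exact (hpar₂ 0 p1 zero_mem_unit ⟨hp1.1, hp1.2⟩ hp1.1).symm
    have hsegem : seg hRT x (e • f r) = f₂ '' Icc 0 p2 := by
      rw [← hp2e, ← h₂0]
      exact (hpar₂ 0 p2 zero_mem_unit ⟨hp2.1, hp2.2⟩ hp2.1).symm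
    have himgm : (fun y => e • y) '' seg hRT x (f r) = seg hRT x (e • f r) := by
      rw [seg_image hRT hcont, hx]
    have hemx : e • f r ≠ x := by
      intro hcon
      exact hmx (MulAction.injective e (show e • f r = e • x by rw [hcon, hx]))
    rcases lt_trichotomy p1 p2 with hlt | heq | hlt
    · -- e moves [x, fr] to a strictly bigger initial segment: e⁻¹ nests
      exfalso
      apply hnn e⁻¹ x (e • f r) _ (arcFrom_seg hRT (Ne.symm hemx))
      have hxinv : e⁻¹ • x = x := inv_smul_eq_iff.2 hx.symm
      rw [seg_image hRT hcont, hxinv, inv_smul_smul, hsegm, hsegem]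
      exact ssub_left hinj₂ hp1.1 hlt hp2.2
    · rw [← hp2e, ← heq, hp1e]
    · -- e nests [x, fr]
      exfalso
      apply hnn e x (f r) _ (arcFrom_seg hRT (Ne.symm hmx))
      rw [himgm, hsegm, hsegem]
      exact ssub_left hinj₂ hp2.1 hlt hp1.2
  · -- maximality
    intro w hw1 hw2
    have hsegr : seg hRT (f r) u = f '' Icc r 1 := by
      rw [← h1]
      exact (hpar r 1 hrI one_mem_unit hrI.2).symm
    rw [hsegr] at hw1
    obtain ⟨t, ht, rfl⟩ := hw1
    rw [mem_Icc] at ht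
    have htW : t ∈ W := ⟨⟨le_trans hrI.1 ht.1, ht.2⟩, hw2⟩
    have : t ≤ r := le_csSup hWbdd htW
    have : t = r := le_antisymm this ht.1
    rw [this]

/-- Concatenation: if two segments meet only at the common endpoint `m`,
their union is the segment between the outer endpoints. -/
theorem seg_concat {u m v : T} (hum : u ≠ m) (hvm : v ≠ m)
    (hint : seg hRT u m ∩ seg hRT m v = {m}) :
    seg hRT u v = seg hRT u m ∪ seg hRT m v := by
  have huv : u ≠ v := by
    rintro rfl
    have : u ∈ seg hRT u m ∩ seg hRT m u := ⟨mem_seg_left hRT _ _, mem_seg_right hRT _ _⟩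
    rw [hint, mem_singleton_iff] at this
    exact hum this
  obtain ⟨f₁, hc₁, hinj₁, h₁0, h₁1, himg₁, -⟩ := seg_param hRT hum
  obtain ⟨f₂, hc₂, hinj₂, h₂0, h₂1, himg₂, -⟩ := seg_param hRT (Ne.symm hvm)
  set clamp : ℝ → ℝ := fun t => max 0 (min t 1) with hclamp
  have hclampc : Continuous clamp := continuous_const.max (continuous_id.min continuous_const)
  have hclampmem : ∀ t : ℝ, clamp t ∈ Icc (0:ℝ) 1 := by
    intro t
    simp only [hclamp, mem_Icc]
    constructor
    · exact le_max_left _ _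
    · exact max_le (by norm_num) (min_le_right _ _)
  have hclampeq : ∀ t : ℝ, t ∈ Icc (0:ℝ) 1 → clamp t = t := by
    intro t ht
    rw [mem_Icc] at ht
    simp only [hclamp]
    rw [min_eq_left ht.2, max_eq_right ht.1]
  have hg₁ : Continuous fun t : ℝ => f₁ (clamp (2 * t)) := by
    rw [← continuousOn_univ]
    apply hc₁.comp ((hclampc.comp (by fun_prop)).continuousOn)
    intro t _
    exact hclampmem _
  have hg₂ : Continuous fun t : ℝ => f₂ (clamp (2 * t - 1)) := by
    rw [← continuousOn_univ]
    apply hc₂.comp ((hclampc.comp (by fun_prop)).continuousOn)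
    intro t _
    exact hclampmem _
  classical
  set F : ℝ → T := fun t => if t ≤ 1/2 then f₁ (clamp (2 * t)) else f₂ (clamp (2 * t - 1))
    with hFdef
  have hF1 : ∀ t : ℝ, t ∈ Icc (0:ℝ) (1/2) → F t = f₁ (2 * t) := by
    intro t ht
    rw [mem_Icc] at ht
    simp only [hFdef]
    rw [if_pos ht.2, hclampeq _ (by rw [mem_Icc]; constructor <;> linarith)]
  have hF2 : ∀ t : ℝ, t ∈ Icc (1/2 : ℝ) 1 → F t = f₂ (2 * t - 1) := by
    intro t ht
    rw [mem_Icc] at ht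
    rcases eq_or_lt_of_le ht.1 with h | h
    · rw [← h]
      simp only [hFdef]
      rw [if_pos le_rfl]
      norm_num
      rw [hclampeq 1 one_mem_unit, h₁1, h₂0]
    · simp only [hFdef]
      rw [if_neg (by linarith), hclampeq _ (by rw [mem_Icc]; constructor <;> linarith)]
  have hFc : ContinuousOn F (Icc 0 1) := by
    apply Continuous.continuousOn
    apply Continuous.if_le hg₁ hg₂ continuous_id continuous_const
    intro t ht
    simp only [id_eq] at ht
    subst ht
    norm_num
    rw [hclampeq 1 one_mem_unit, hclampeq 0 zero_mem_unit, h₁1, h₂0]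
  have hmem1 : ∀ s : ℝ, 0 ≤ s → s ≤ 1/2 → f₁ (2*s) ∈ seg hRT u m := by
    intro s h1 h2
    rw [← himg₁]
    exact ⟨2*s, mem_Icc.2 ⟨by linarith, by linarith⟩, rfl⟩
  have hmem2 : ∀ t : ℝ, 1/2 ≤ t → t ≤ 1 → f₂ (2*t - 1) ∈ seg hRT m v := by
    intro t h1 h2
    rw [← himg₂]
    exact ⟨2*t - 1, mem_Icc.2 ⟨by linarith, by linarith⟩, rfl⟩
  have hFinj : InjOn F (Icc 0 1) := by
    intro s hs t ht he
    rw [mem_Icc] at hs ht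
    rcases le_or_gt s (1/2) with h1 | h1 <;> rcases le_or_gt t (1/2) with h2 | h2
    · rw [hF1 s (mem_Icc.2 ⟨hs.1, h1⟩), hF1 t (mem_Icc.2 ⟨ht.1, h2⟩)] at he
      have := hinj₁ (mem_Icc.2 ⟨by linarith, by linarith⟩)
        (mem_Icc.2 ⟨by linarith, by linarith⟩) he
      linarith
    · rw [hF1 s (mem_Icc.2 ⟨hs.1, h1⟩), hF2 t (mem_Icc.2 ⟨h2.le, ht.2⟩)] at he
      exfalso
      have hm' : f₁ (2*s) ∈ seg hRT u m ∩ seg hRT m v := by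
        refine ⟨hmem1 s hs.1 h1, ?_⟩
        rw [he]
        exact hmem2 t h2.le ht.2
      rw [hint, mem_singleton_iff] at hm'
      have hmeq : f₂ (2*t - 1) = m := by rw [← he, hm']
      have h2t : 2*t - 1 = 0 := hinj₂ (mem_Icc.2 ⟨by linarith, by linarith⟩)
        zero_mem_unit (by rw [hmeq, h₂0])
      linarith
    · rw [hF2 s (mem_Icc.2 ⟨h1.le, hs.2⟩), hF1 t (mem_Icc.2 ⟨ht.1, h2⟩)] at he
      exfalso
      have hm' : f₁ (2*t) ∈ seg hRT u m ∩ seg hRT m v := by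
        refine ⟨hmem1 t ht.1 h2, ?_⟩
        rw [← he]
        exact hmem2 s h1.le hs.2
      rw [hint, mem_singleton_iff] at hm'
      have hmeq : f₂ (2*s - 1) = m := by rw [he, hm']
      have h2s : 2*s - 1 = 0 := hinj₂ (mem_Icc.2 ⟨by linarith, by linarith⟩)
        zero_mem_unit (by rw [hmeq, h₂0])
      linarith
    · rw [hF2 s (mem_Icc.2 ⟨h1.le, hs.2⟩), hF2 t (mem_Icc.2 ⟨h2.le, ht.2⟩)] at he
      have := hinj₂ (mem_Icc.2 ⟨by linarith, by linarith⟩)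
        (mem_Icc.2 ⟨by linarith, by linarith⟩) he
      linarith
  have him1 : F '' Icc 0 (1/2) = seg hRT u m := by
    apply Subset.antisymm
    · rintro _ ⟨t, ht, rfl⟩
      rw [hF1 t ht]
      have htI := mem_Icc.1 ht
      exact hmem1 t htI.1 htI.2
    · intro z hz
      rw [← himg₁] at hz
      obtain ⟨r, hr, rfl⟩ := hz
      have hrI := mem_Icc.1 hr
      refine ⟨r/2, mem_Icc.2 ⟨by linarith, by linarith⟩, ?_⟩
      rw [hF1 (r/2) (mem_Icc.2 ⟨by linarith, by linarith⟩)]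
      congr 1
      ring
  have him2 : F '' Icc (1/2) 1 = seg hRT m v := by
    apply Subset.antisymm
    · rintro _ ⟨t, ht, rfl⟩
      rw [hF2 t ht]
      have htI := mem_Icc.1 ht
      exact hmem2 t htI.1 htI.2
    · intro z hz
      rw [← himg₂] at hz
      obtain ⟨r, hr, rfl⟩ := hz
      have hrI := mem_Icc.1 hr
      refine ⟨(r+1)/2, mem_Icc.2 ⟨by linarith, by linarith⟩, ?_⟩
      rw [hF2 ((r+1)/2) (mem_Icc.2 ⟨by linarith, by linarith⟩)]
      congr 1
      ring
  have hsplit : Icc (0:ℝ) 1 = Icc 0 (1/2) ∪ Icc (1/2) 1 :=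
    (Icc_union_Icc_eq_Icc (by norm_num) (by norm_num)).symm
  have harc : ArcFrom u v (seg hRT u m ∪ seg hRT m v) := by
    refine ⟨F, hFc, hFinj, ?_, ?_, ?_⟩
    · rw [hF1 0 (mem_Icc.2 ⟨le_rfl, by norm_num⟩)]
      rw [show (2:ℝ) * 0 = 0 by norm_num, h₁0]
    · rw [hF2 1 (mem_Icc.2 ⟨by norm_num, le_rfl⟩)]
      rw [show (2:ℝ) * 1 - 1 = 1 by norm_num, h₂1]
    · rw [hsplit, image_union, him1, him2]
  exact seg_eq hRT harc

end Key

section Main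

variable (hRT : IsRTree T)

/-- Tripod lemma: `[p,q] ⊆ [p,w] ∪ [w,q]`. -/
theorem seg_sub_union (p q w : T) : seg hRT p q ⊆ seg hRT p w ∪ seg hRT w q := by
  by_cases hpq : p = q
  · subst hpq
    intro z hz
    rw [seg_self, mem_singleton_iff] at hz
    subst hz
    exact Or.inl (mem_seg_left hRT _ _)
  by_cases hwp : w = p
  · subst hwp
    intro z hz
    exact Or.inr hz
  by_cases hwq : w = q
  · subst hwq
    intro z hz
    exact Or.inl hz
  obtain ⟨f, hcf, hinj, h0, h1, himg, hpar⟩ := seg_param hRT hpq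
  set W : Set ℝ := Icc 0 1 ∩ f ⁻¹' (seg hRT p w) with hWdef
  have hWclosed : IsClosed W :=
    hcf.preimage_isClosed_of_isClosed isClosed_Icc (isClosed_seg hRT _ _)
  have h0W : (0:ℝ) ∈ W := ⟨zero_mem_unit, by
    simp only [mem_preimage, h0]
    exact mem_seg_left hRT _ _⟩
  have hWcomp : IsCompact W := isCompact_Icc.of_isClosed_subset hWclosed inter_subset_left
  have hWbdd : BddAbove W := bddAbove_Icc.mono inter_subset_left
  set r : ℝ := sSup W with hrdef
  have hrW : r ∈ W := hWcomp.sSup_mem ⟨0, h0W⟩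
  have hrI : r ∈ Icc (0:ℝ) 1 := hrW.1
  have hmpw : f r ∈ seg hRT p w := hrW.2
  have hmax : ∀ t, t ∈ Icc r 1 → f t ∈ seg hRT p w → t = r := by
    intro t ht hmem
    rw [mem_Icc] at ht
    have htW : t ∈ W := ⟨⟨le_trans hrI.1 ht.1, ht.2⟩, hmem⟩
    exact le_antisymm (le_csSup hWbdd htW) ht.1
  have hmemB : f r ∈ seg hRT p q := by
    rw [← himg]
    exact ⟨r, hrI, rfl⟩
  have hsegrq : seg hRT (f r) q = f '' Icc r 1 := by
    rw [← h1]
    exact (hpar r 1 hrI one_mem_unit hrI.2).symm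
  have hmwq : f r ∈ seg hRT w q := by
    by_cases hmw : f r = w
    · rw [hmw]
      exact mem_seg_left hRT _ _
    by_cases hmq : f r = q
    · rw [hmq]
      exact mem_seg_right hRT _ _
    have hint : seg hRT w (f r) ∩ seg hRT (f r) q = {f r} := by
      apply Subset.antisymm
      · rintro z ⟨hz1, hz2⟩
        rw [hsegrq] at hz2
        obtain ⟨t, ht, rfl⟩ := hz2
        have hzin : f t ∈ seg hRT p w :=
          seg_sub_two hRT (mem_seg_right hRT p w) hmpw hz1
        rw [mem_singleton_iff, hmax t ht hzin]
      · rintro z rfl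
        exact ⟨mem_seg_right hRT _ _, mem_seg_left hRT _ _⟩
    rw [seg_concat hRT (fun h => hmw h.symm) (fun h => hmq h.symm) hint]
    exact Or.inl (mem_seg_right hRT _ _)
  intro z hz
  rw [seg_split hRT hmemB] at hz
  rcases hz with hz | hz
  · exact Or.inl (seg_subset_left hRT hmpw hz)
  · exact Or.inr (seg_subset_right hRT hmwq hz)

/-- Midpoint lemma: an elliptic element has a fixed point on `[z, ez]` for every `z`. -/
theorem midpoint_fix (hcont : ∀ g : G, Continuous fun x : T => g • x)
    (hnn : NonNesting G T) {e : G} (he : ∃ y : T, e • y = y) (z : T) :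
    ∃ m, m ∈ seg hRT z (e • z) ∧ e • m = m := by
  obtain ⟨y, hy⟩ := he
  by_cases hz : e • z = z
  · refine ⟨z, ?_, hz⟩
    rw [hz, seg_self]
    exact rfl
  have hzy : z ≠ y := fun h => hz (by rw [h, hy])
  obtain ⟨m, hm1, hm2, hfix, hmax⟩ := key hRT hcont hnn hy hzy
  refine ⟨m, ?_, hfix⟩
  by_cases hmz : m = z
  · rw [hmz]
    exact mem_seg_left hRT _ _
  by_cases hmez : m = e • z
  · rw [hmez]
    exact mem_seg_right hRT _ _
  have hint : seg hRT z m ∩ seg hRT m (e • z) = {m} := by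
    apply Subset.antisymm
    · rintro w ⟨hw1, hw2⟩
      rw [mem_singleton_iff]
      apply hmax w
      · rw [seg_comm]
        exact hw1
      · exact seg_subset_right hRT hm2 hw2
    · rintro w rfl
      exact ⟨mem_seg_right hRT _ _, mem_seg_left hRT _ _⟩
  rw [seg_concat hRT (fun h => hmz h.symm) (fun h => hmez h.symm) hint]
  exact Or.inl (mem_seg_right hRT _ _)

/-- If `e` fixes `p` and no other point of `[p,q]`, then `e[p,q] ∩ [p,q] = {p}`. -/
theorem bridge_off (hcont : ∀ g : G, Continuous fun x : T => g • x)
    (hnn : NonNesting G T) {e : G} {p q : T} (hpq : p ≠ q) (hp : e • p = p)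
    (honly : ∀ c ∈ seg hRT p q, e • c = c → c = p) :
    (fun x => e • x) '' seg hRT p q ∩ seg hRT p q = {p} := by
  apply Subset.antisymm
  · rintro u ⟨⟨v, hv, rfl⟩, hu⟩
    rw [mem_singleton_iff]
    show e • v = p
    obtain ⟨f, hcf, hinj, h0, h1, himg, hpar⟩ := seg_param hRT hpq
    rw [← himg] at hv hu
    obtain ⟨r', hr', rfl⟩ := hv
    obtain ⟨r, hr, hre⟩ := hu
    have hre : f r = e • f r' := hre
    rw [mem_Icc] at hr hr'
    have hsegr' : seg hRT p (f r') = f '' Icc 0 r' := by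
      rw [← h0]
      exact (hpar 0 r' zero_mem_unit ⟨hr'.1, hr'.2⟩ hr'.1).symm
    have hsegr : seg hRT p (f r) = f '' Icc 0 r := by
      rw [← h0]
      exact (hpar 0 r zero_mem_unit ⟨hr.1, hr.2⟩ hr.1).symm
    have himgC : (fun x => e • x) '' seg hRT p (f r') = seg hRT p (f r) := by
      rw [seg_image hRT hcont, hp, ← hre]
    rcases lt_trichotomy r' r with hlt | heq | hlt
    · exfalso
      have hpr : p ≠ f r := by
        rw [← h0]
        intro hcon
        have := hinj zero_mem_unit ⟨hr.1, hr.2⟩ hcon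
        linarith
      apply hnn e⁻¹ p (f r) _ (arcFrom_seg hRT hpr)
      have hinv : (fun x => e⁻¹ • x) '' seg hRT p (f r) = seg hRT p (f r') := by
        rw [← himgC, image_inv_image]
      rw [hinv, hsegr, hsegr']
      exact ssub_left hinj hr'.1 hlt hr.2
    · rw [← heq] at hre
      have : f r' = p := honly (f r') (by rw [← himg]; exact ⟨r', mem_Icc.2 hr', rfl⟩) hre.symm
      rw [this, hp]
    · exfalso
      have hpr' : p ≠ f r' := by
        rw [← h0]
        intro hcon
        have := hinj zero_mem_unit ⟨hr'.1, hr'.2⟩ hcon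
        linarith
      apply hnn e p (f r') _ (arcFrom_seg hRT hpr')
      rw [himgC, hsegr, hsegr']
      exact ssub_left hinj hr.1 hlt hr'.2
  · intro z hz
    rw [mem_singleton_iff] at hz
    rw [hz]
    refine ⟨⟨_, mem_seg_left hRT p q, hp⟩, mem_seg_left hRT _ _⟩

/-- Bridge between the fixed sets of two elliptics with disjoint fixed sets. -/
theorem bridge (hcont : ∀ g : G, Continuous fun x : T => g • x)
    (hnn : NonNesting G T) {a b : G} {x y : T} (hx : a • x = x) (hy : b • y = y)
    (hdisj : ∀ z : T, a • z = z → b • z = z → False) :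
    ∃ p q : T, p ≠ q ∧ a • p = p ∧ b • q = q ∧
      (∀ c ∈ seg hRT p q, a • c = c → c = p) ∧
      (∀ c ∈ seg hRT p q, b • c = c → c = q) := by
  have hxy : x ≠ y := by
    rintro rfl
    exact hdisj x hx hy
  obtain ⟨f, hcf, hinj, h0, h1, himg, hpar⟩ := seg_param hRT hxy
  set S : Set ℝ := Icc 0 1 ∩ f ⁻¹' {z | a • z = z} with hSdef
  set S' : Set ℝ := Icc 0 1 ∩ f ⁻¹' {z | b • z = z} with hS'def
  have hSclosed : IsClosed S :=
    hcf.preimage_isClosed_of_isClosed isClosed_Icc (isClosed_eq (hcont a) continuous_id)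
  have hS'closed : IsClosed S' :=
    hcf.preimage_isClosed_of_isClosed isClosed_Icc (isClosed_eq (hcont b) continuous_id)
  have h0S : (0:ℝ) ∈ S := ⟨zero_mem_unit, by simp only [mem_preimage, mem_setOf_eq, h0]; exact hx⟩
  have h1S' : (1:ℝ) ∈ S' := ⟨one_mem_unit, by simp only [mem_preimage, mem_setOf_eq, h1]; exact hy⟩
  have hScomp : IsCompact S := isCompact_Icc.of_isClosed_subset hSclosed inter_subset_left
  have hS'comp : IsCompact S' := isCompact_Icc.of_isClosed_subset hS'closed inter_subset_left
  have hSbdd : BddAbove S := bddAbove_Icc.mono inter_subset_left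
  have hS'bdd : BddBelow S' := bddBelow_Icc.mono inter_subset_left
  set s : ℝ := sSup S with hs
  set t₀ : ℝ := sInf S' with ht₀
  have hsS : s ∈ S := hScomp.sSup_mem ⟨0, h0S⟩
  have ht₀S' : t₀ ∈ S' := hS'comp.sInf_mem ⟨1, h1S'⟩
  have hafs : a • f s = f s := hsS.2
  have hbft : b • f t₀ = f t₀ := ht₀S'.2
  have hst : s < t₀ := by
    by_contra hcon
    push_neg at hcon
    have hmem : f t₀ ∈ seg hRT x (f s) := by
      have : seg hRT x (f s) = f '' Icc 0 s := by
        rw [← h0]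
        exact (hpar 0 s zero_mem_unit hsS.1 hsS.1.1).symm
      rw [this]
      exact ⟨t₀, mem_Icc.2 ⟨ht₀S'.1.1, hcon⟩, rfl⟩
    have : a • f t₀ = f t₀ := fix_seg hRT hcont hnn hx hafs hmem
    exact hdisj (f t₀) this hbft
  have hsegpq : seg hRT (f s) (f t₀) = f '' Icc s t₀ :=
    (hpar s t₀ hsS.1 ht₀S'.1 hst.le).symm
  refine ⟨f s, f t₀, ?_, hafs, hbft, ?_, ?_⟩
  · intro hcon
    have := hinj hsS.1 ht₀S'.1 hcon
    linarith
  · intro c hc hac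
    rw [hsegpq] at hc
    obtain ⟨rr, hrr, rfl⟩ := hc
    rw [mem_Icc] at hrr
    have hrrS : rr ∈ S := ⟨⟨le_trans hsS.1.1 hrr.1, le_trans hrr.2 ht₀S'.1.2⟩, hac⟩
    have : rr = s := le_antisymm (le_csSup hSbdd hrrS) hrr.1
    rw [this]
  · intro c hc hbc
    rw [hsegpq] at hc
    obtain ⟨rr, hrr, rfl⟩ := hc
    rw [mem_Icc] at hrr
    have hrrS' : rr ∈ S' := ⟨⟨le_trans hsS.1.1 hrr.1, le_trans hrr.2 ht₀S'.1.2⟩, hbc⟩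
    have : rr = t₀ := le_antisymm hrr.2 (csInf_le hS'bdd hrrS')
    rw [this]

/-- Main proposition: the product of two elliptic elements with disjoint
fixed-point sets is hyperbolic. -/
theorem prod_hyp (hRT : IsRTree T) (hcont : ∀ g : G, Continuous fun x : T => g • x)
    (hnn : NonNesting G T) {a b : G} (hea : ∃ x : T, a • x = x) (heb : ∃ y : T, b • y = y)
    (hdisj : ∀ z : T, a • z = z → b • z = z → False) :
    ¬∃ x : T, (a * b) • x = x := by
  rintro ⟨x', hx'⟩
  obtain ⟨x, hx⟩ := hea
  obtain ⟨y, hy⟩ := heb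
  obtain ⟨p, q, hpq, hap, hbq, honlya, honlyb⟩ := bridge hRT hcont hnn hx hy hdisj
  have hapinv : a⁻¹ • p = p := inv_smul_eq_iff.2 hap.symm
  have hbqinv : b⁻¹ • q = q := inv_smul_eq_iff.2 hbq.symm
  have hcomm : seg hRT q p = seg hRT p q := seg_comm hRT q p
  -- off-bridge facts
  have hBa : (fun x => a • x) '' seg hRT p q ∩ seg hRT p q = {p} :=
    bridge_off hRT hcont hnn hpq hap honlya
  have hBainv : (fun x => a⁻¹ • x) '' seg hRT p q ∩ seg hRT p q = {p} :=
    bridge_off hRT hcont hnn hpq hapinv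
      (fun c hc hfx => honlya c hc (inv_smul_eq_iff.1 hfx).symm)
  have hBb : (fun x => b • x) '' seg hRT p q ∩ seg hRT p q = {q} := by
    have h' := bridge_off hRT hcont hnn (Ne.symm hpq) hbq
      (fun c hc hfx => honlyb c (hcomm ▸ hc) hfx)
    rwa [hcomm] at h'
  have hBbinv : (fun x => b⁻¹ • x) '' seg hRT p q ∩ seg hRT p q = {q} := by
    have h' := bridge_off hRT hcont hnn (Ne.symm hpq) hbqinv
      (fun c hc hfx => honlyb c (hcomm ▸ hc) (inv_smul_eq_iff.1 hfx).symm)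
    rwa [hcomm] at h'
  -- the image segments as segments
  have haB : (fun x => a • x) '' seg hRT p q = seg hRT p (a • q) := by
    rw [seg_image hRT hcont, hap]
  have haInvB : (fun x => a⁻¹ • x) '' seg hRT p q = seg hRT p (a⁻¹ • q) := by
    rw [seg_image hRT hcont, hapinv]
  have hbB : (fun x => b • x) '' seg hRT p q = seg hRT (b • p) q := by
    rw [seg_image hRT hcont, hbq]
  have hbInvB : (fun x => b⁻¹ • x) '' seg hRT p q = seg hRT (b⁻¹ • p) q := by
    rw [seg_image hRT hcont, hbqinv]
  -- interior point of the bridge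
  obtain ⟨f, hcf, hinj, h0, h1, himg, hpar⟩ := seg_param hRT hpq
  have hc₀mem : f (1/2) ∈ seg hRT p q := by
    rw [← himg]
    exact ⟨1/2, mem_Icc.2 ⟨by norm_num, by norm_num⟩, rfl⟩
  have hc₀p : f (1/2) ≠ p := by
    rw [← h0]
    intro hcon
    have := hinj (mem_Icc.2 ⟨by norm_num, by norm_num⟩) zero_mem_unit hcon
    norm_num at this
  have hc₀q : f (1/2) ≠ q := by
    rw [← h1]
    intro hcon
    have := hinj (mem_Icc.2 ⟨by norm_num, by norm_num⟩) one_mem_unit hcon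
    norm_num at this
  -- setup for the key lemma
  have haq : a • q ≠ q := fun hcon => hdisj q hcon hbq
  have hx'q : q ≠ x' := by
    rintro rfl
    apply haq
    have h' := hx'
    rwa [mul_smul, hbq] at h'
  have heu : (a * b) • q = a • q := by rw [mul_smul, hbq]
  obtain ⟨m, hm1, hm2, hfix, hmax⟩ := key hRT hcont hnn hx' hx'q
  rw [heu] at hm2 hmax
  have hmq : m ≠ q := by
    rintro rfl
    rw [heu] at hfix
    exact haq hfix
  have hq'p : a • q ≠ p := by
    intro hcon
    exact hpq (MulAction.injective a (show a • p = a • q by rw [hap, hcon]))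
  -- m lies on [q, aq]
  have hmqq' : m ∈ seg hRT q (a • q) := by
    by_cases hmq' : m = a • q
    · rw [hmq']
      exact mem_seg_right hRT _ _
    have hint : seg hRT q m ∩ seg hRT m (a • q) = {m} := by
      apply Subset.antisymm
      · rintro w ⟨hw1, hw2⟩
        rw [mem_singleton_iff]
        apply hmax w
        · rw [seg_comm]
          exact hw1
        · exact seg_subset_right hRT hm2 hw2
      · rintro w rfl
        exact ⟨mem_seg_right hRT _ _, mem_seg_left hRT _ _⟩
    rw [seg_concat hRT (fun h => hmq h.symm) (fun h => hmq' h.symm) hint]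
    exact Or.inl (mem_seg_right hRT _ _)
  -- [q, aq] = B ∪ aB
  have hsegqq' : seg hRT q (a • q) = seg hRT p q ∪ seg hRT p (a • q) := by
    have hint : seg hRT q p ∩ seg hRT p (a • q) = {p} := by
      rw [hcomm, ← haB, inter_comm]
      exact hBa
    rw [seg_concat hRT (Ne.symm hpq) hq'p hint, hcomm]
  rw [hsegqq'] at hmqq'
  have habm : a • (b • m) = m := by
    rw [← mul_smul]
    exact hfix
  rcases hmqq' with hmB | hmaB
  · -- m on the bridge : b m = a⁻¹ m gives a point of bB ∩ a⁻¹B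
    have hbam : b • m = a⁻¹ • m := (inv_smul_eq_iff.2 habm.symm).symm
    have hw1 : b • m ∈ seg hRT (b • p) q := by
      rw [← hbB]
      exact ⟨m, hmB, rfl⟩
    have hw2 : b • m ∈ seg hRT p (a⁻¹ • q) := by
      rw [← haInvB]
      exact ⟨m, hmB, hbam.symm⟩
    rcases seg_sub_union hRT p q (b • m) hc₀mem with h | h
    · have : f (1/2) ∈ (fun x => a⁻¹ • x) '' seg hRT p q ∩ seg hRT p q := by
        refine ⟨?_, hc₀mem⟩
        rw [haInvB]
        exact seg_sub_two hRT (mem_seg_left hRT _ _) hw2 h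
      rw [hBainv, mem_singleton_iff] at this
      exact hc₀p this
    · have : f (1/2) ∈ (fun x => b • x) '' seg hRT p q ∩ seg hRT p q := by
        refine ⟨?_, hc₀mem⟩
        rw [hbB]
        exact seg_sub_two hRT hw1 (mem_seg_right hRT _ _) h
      rw [hBb, mem_singleton_iff] at this
      exact hc₀q this
  · -- m on aB : m is a point of aB ∩ b⁻¹B
    have hmaB' : m ∈ (fun x => a • x) '' seg hRT p q := by
      rw [haB]
      exact hmaB
    obtain ⟨n, hn, hne⟩ := hmaB'
    have hne : a • n = m := hne
    have hbm : b • m = n := by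
      apply MulAction.injective a
      show a • (b • m) = a • n
      rw [habm, hne]
    have hmbinv : m ∈ seg hRT (b⁻¹ • p) q := by
      rw [← hbInvB]
      refine ⟨n, hn, ?_⟩
      show b⁻¹ • n = m
      rw [← hbm, inv_smul_smul]
    rcases seg_sub_union hRT p q m hc₀mem with h | h
    · have : f (1/2) ∈ (fun x => a • x) '' seg hRT p q ∩ seg hRT p q := by
        refine ⟨?_, hc₀mem⟩
        rw [haB]
        exact seg_sub_two hRT (mem_seg_left hRT _ _) hmaB h
      rw [hBa, mem_singleton_iff] at this
      exact hc₀p this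
    · have : f (1/2) ∈ (fun x => b⁻¹ • x) '' seg hRT p q ∩ seg hRT p q := by
        refine ⟨?_, hc₀mem⟩
        rw [hbInvB]
        exact seg_sub_two hRT hmbinv (mem_seg_right hRT _ _) h
      rw [hBbinv, mem_singleton_iff] at this
      exact hc₀q this

end Main

end Stmt19

theorem stmt19 {T G : Type*} [MetricSpace T] [Group G] [MulAction G T]
    (hRT : IsRTree T) (hcont : ∀ g : G, Continuous fun x : T => g • x)
    (hnn : NonNesting G T) (g h : G)
    (hg : ∃ x : T, g • x = x) (hh : ∃ x : T, h • x = x)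
    (hdisj : {x : T | g • x = x} ∩ {x : T | h • x = x} = ∅) :
    ¬∃ x : T, (g⁻¹ * h⁻¹ * g * h) • x = x := by
  obtain ⟨xg, hxg⟩ := hg
  have hdisj' : ∀ z : T, g • z = z → h • z = z → False := by
    intro z h1 h2
    have hz : z ∈ {x : T | g • x = x} ∩ {x : T | h • x = x} := ⟨h1, h2⟩
    rw [hdisj] at hz
    exact hz
  have hea : ∃ x : T, g⁻¹ • x = x := ⟨xg, inv_smul_eq_iff.2 hxg.symm⟩
  have heb : ∃ x : T, (h⁻¹ * g * h) • x = x := by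
    refine ⟨h⁻¹ • xg, ?_⟩
    rw [mul_smul, mul_smul, smul_inv_smul, hxg]
  have hdisjab : ∀ z : T, g⁻¹ • z = z → (h⁻¹ * g * h) • z = z → False := by
    intro z h1 h2
    have hgz : g • z = z := (inv_smul_eq_iff.1 h1).symm
    rw [mul_smul, mul_smul] at h2
    have hghz : g • (h • z) = h • z := by
      calc g • (h • z) = h • (h⁻¹ • (g • (h • z))) := (smul_inv_smul h _).symm
        _ = h • z := by rw [h2]
    by_cases hhz : h • z = z
    · exact hdisj' z hgz hhz
    · obtain ⟨m, hm, hhm⟩ := Stmt19.midpoint_fix hRT hcont hnn hh z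
      have hgm : g • m = m := Stmt19.fix_seg hRT hcont hnn hgz hghz hm
      exact hdisj' m hgm hhm
  have hmain := Stmt19.prod_hyp hRT hcont hnn hea heb hdisjab
  rintro ⟨x', hx'⟩
  apply hmain
  refine ⟨x', ?_⟩
  rw [show g⁻¹ * (h⁻¹ * g * h) = g⁻¹ * h⁻¹ * g * h by group]
  exact hx'
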